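/- For every real λ and all integers 1 ≤ j ≤ n, the density of the j-th order statistic from a sample of size n from SN(λ), namely the BSN(λ, j, n−j+1) density, is log-concave: the function x ↦ log g(x; λ, j, n−j+1) is concave on ℝ. -/

import Mathlib

open MeasureTheory

open Real Set Filter

/-- Standard normal density. -/
noncomputable def normPdf (x : ℝ) : ℝ := Real.exp (-x ^ 2 / 2) / Real.sqrt (2 * Real.pi)

lemma sqrt2pi_pos : 0 < Real.sqrt (2 * Real.pi) :=
  Real.sqrt_pos.2 (by positivity)

lemma normPdf_pos (x : ℝ) : 0 < normPdf x := by
  unfold normPdf; positivity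

lemma continuous_normPdf : Continuous normPdf := by
  unfold normPdf
  fun_prop

lemma hasDerivAt_normPdf (x : ℝ) : HasDerivAt normPdf (-x * normPdf x) x := by
  have h1 : HasDerivAt (fun x : ℝ => -x ^ 2 / 2) (-x) x := by
    have := ((hasDerivAt_pow 2 x).neg).div_const 2
    simpa using this.congr_deriv (by ring)
  have := ((h1.exp).div_const (Real.sqrt (2 * Real.pi)))
  have heq : (fun x : ℝ => Real.exp (-x ^ 2 / 2) / Real.sqrt (2 * Real.pi)) = normPdf := rfl
  rw [heq] at this
  exact this.congr_deriv (by unfold normPdf; ring)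

lemma normPdf_eq (x : ℝ) : normPdf x = Real.exp (-(1/2) * x ^ 2) / Real.sqrt (2 * Real.pi) := by
  unfold normPdf; ring_nf

lemma integrable_normPdf : Integrable normPdf := by
  have := (integrable_exp_neg_mul_sq (by norm_num : (0:ℝ) < 1/2)).div_const (Real.sqrt (2 * Real.pi))
  exact this.congr (by filter_upwards with x; rw [normPdf_eq])

lemma integral_normPdf : ∫ x, normPdf x = 1 := by
  have h : ∫ x, normPdf x = (∫ x, Real.exp (-(1/2) * x ^ 2)) / Real.sqrt (2 * Real.pi) := by
    rw [← integral_div]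
    exact integral_congr_ae (by filter_upwards with x; rw [normPdf_eq])
  rw [h, integral_gaussian]
  rw [show Real.pi / (1/2) = 2 * Real.pi by ring]
  field_simp

lemma integrable_mul_normPdf : Integrable (fun x => x * normPdf x) := by
  have := (integrable_mul_exp_neg_mul_sq (by norm_num : (0:ℝ) < 1/2)).div_const
    (Real.sqrt (2 * Real.pi))
  exact this.congr (by filter_upwards with x; rw [normPdf_eq]; ring)

lemma normPdf_le (x : ℝ) : normPdf x ≤ (Real.sqrt (2 * Real.pi))⁻¹ := by
  unfold normPdf
  rw [div_eq_mul_inv]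
  have h1 : Real.exp (-x ^ 2 / 2) ≤ 1 := by
    rw [show (1:ℝ) = Real.exp 0 by simp]
    exact Real.exp_le_exp.2 (by nlinarith [sq_nonneg x])
  calc Real.exp (-x ^ 2 / 2) * (Real.sqrt (2 * Real.pi))⁻¹
      ≤ 1 * (Real.sqrt (2 * Real.pi))⁻¹ := by gcongr
    _ = (Real.sqrt (2 * Real.pi))⁻¹ := one_mul _

lemma tendsto_sq_half_atBot : Tendsto (fun x : ℝ => -x ^ 2 / 2) atBot atBot := by
  apply Tendsto.atBot_div_const (by norm_num : (0:ℝ) < 2)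
  apply tendsto_neg_atTop_atBot.comp
  have : Tendsto (fun x : ℝ => (-x) ^ 2) atBot atTop :=
    (tendsto_pow_atTop (by norm_num)).comp tendsto_neg_atBot_atTop
  exact this.congr (fun x => by ring)

lemma tendsto_sq_half_atTop : Tendsto (fun x : ℝ => -x ^ 2 / 2) atTop atBot := by
  apply Tendsto.atBot_div_const (by norm_num : (0:ℝ) < 2)
  exact tendsto_neg_atTop_atBot.comp (tendsto_pow_atTop (by norm_num))

lemma tendsto_normPdf_atBot : Tendsto normPdf atBot (nhds 0) := by
  have h := (Real.tendsto_exp_atBot.comp tendsto_sq_half_atBot).div_const (Real.sqrt (2 * Real.pi))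
  rw [zero_div] at h
  exact h.congr (fun x => rfl)

lemma tendsto_normPdf_atTop : Tendsto normPdf atTop (nhds 0) := by
  have h := (Real.tendsto_exp_atBot.comp tendsto_sq_half_atTop).div_const (Real.sqrt (2 * Real.pi))
  rw [zero_div] at h
  exact h.congr (fun x => rfl)

/-! ### Generic CDF lemmas -/

section CDF
variable {f : ℝ → ℝ} (hc : Continuous f) (hi : Integrable f) (hpos : ∀ x, 0 < f x)

include hi in
lemma cdf_eq_aux (x : ℝ) :
    (∫ t in Iic x, f t) = (∫ t in Iic 0, f t) + ∫ t in (0:ℝ)..x, f t := by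
  rw [← intervalIntegral.integral_Iic_sub_Iic hi.integrableOn hi.integrableOn]; ring

include hc hi in
lemma hasDerivAt_cdf (x : ℝ) : HasDerivAt (fun y => ∫ t in Iic y, f t) (f x) x := by
  have h2 : HasDerivAt (fun u => ∫ t in (0:ℝ)..u, f t) (f x) x :=
    intervalIntegral.integral_hasDerivAt_right (hi.intervalIntegrable)
      (hc.stronglyMeasurable.stronglyMeasurableAtFilter) hc.continuousAt
  have heq : (fun y => ∫ t in Iic y, f t)
      = fun y => (∫ t in Iic 0, f t) + ∫ t in (0:ℝ)..y, f t := funext (cdf_eq_aux hi)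
  rw [heq]
  exact h2.const_add _

include hi hpos in
lemma cdf_pos (x : ℝ) : 0 < ∫ t in Iic x, f t := by
  rw [setIntegral_pos_iff_support_of_nonneg_ae
    (Filter.Eventually.of_forall fun t => (hpos t).le) hi.integrableOn]
  have : Function.support f = Set.univ := Set.eq_univ_of_forall fun t => (hpos t).ne'
  rw [this, Set.univ_inter, Real.volume_Iic]
  simp

include hi hpos in
lemma tail_pos (x : ℝ) : 0 < ∫ t in Ioi x, f t := by
  rw [setIntegral_pos_iff_support_of_nonneg_ae
    (Filter.Eventually.of_forall fun t => (hpos t).le) hi.integrableOn]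
  have : Function.support f = Set.univ := Set.eq_univ_of_forall fun t => (hpos t).ne'
  rw [this, Set.univ_inter, Real.volume_Ioi]
  simp

include hi in
lemma cdf_add_tail (x : ℝ) :
    (∫ t in Iic x, f t) + (∫ t in Ioi x, f t) = ∫ t, f t :=
  intervalIntegral.integral_Iic_add_Ioi hi.integrableOn hi.integrableOn

end CDF

/-- Standard normal cdf. -/
noncomputable def normCdf (x : ℝ) : ℝ := ∫ t in Set.Iic x, normPdf t

lemma hasDerivAt_normCdf (x : ℝ) : HasDerivAt normCdf (normPdf x) x :=
  hasDerivAt_cdf continuous_normPdf integrable_normPdf x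

lemma normCdf_pos (x : ℝ) : 0 < normCdf x :=
  cdf_pos integrable_normPdf normPdf_pos x

lemma normCdf_le_one (x : ℝ) : normCdf x ≤ 1 := by
  have h := cdf_add_tail (f := normPdf) integrable_normPdf x
  have h2 := tail_pos integrable_normPdf normPdf_pos x
  rw [integral_normPdf] at h
  unfold normCdf
  linarith

lemma continuous_normCdf : Continuous normCdf :=
  continuous_iff_continuousAt.2 fun x => (hasDerivAt_normCdf x).continuousAt

/-! ### Mills ratio and log-concavity of the normal cdf -/

lemma integral_Iic_neg_mul_normPdf (x : ℝ) :
    ∫ t in Iic x, (-t * normPdf t) = normPdf x := by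
  have h := MeasureTheory.integral_Iic_of_hasDerivAt_of_tendsto
    (f := normPdf) (f' := fun t => -t * normPdf t) (a := x)
    (continuous_normPdf.continuousWithinAt)
    (fun t _ => hasDerivAt_normPdf t)
    (integrable_mul_normPdf.neg.congr
      (by filter_upwards with t; simp)).integrableOn
    tendsto_normPdf_atBot
  simpa using h

lemma mills (x : ℝ) : -x * normCdf x ≤ normPdf x := by
  rcases le_or_gt 0 x with hx | hx
  · have : -x * normCdf x ≤ 0 :=
      mul_nonpos_of_nonpos_of_nonneg (by linarith) (normCdf_pos x).le
    linarith [normPdf_pos x]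
  · rw [← integral_Iic_neg_mul_normPdf x]
    unfold normCdf
    rw [← integral_const_mul]
    apply setIntegral_mono_on
    · exact (integrable_normPdf.const_mul _).integrableOn
    · exact (integrable_mul_normPdf.neg.congr
        (by filter_upwards with t; simp)).integrableOn
    · exact measurableSet_Iic
    · intro t ht
      have : -x ≤ -t := by simpa using ht.out
      nlinarith [normPdf_pos t]

lemma hasDerivAt_millsRatio (x : ℝ) :
    HasDerivAt (fun y => normPdf y / normCdf y)
      ((-x * normPdf x * normCdf x - normPdf x * normPdf x) / normCdf x ^ 2) x :=
  (hasDerivAt_normPdf x).div (hasDerivAt_normCdf x) (normCdf_pos x).ne'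

lemma antitone_millsRatio : Antitone (fun y => normPdf y / normCdf y) := by
  apply antitone_of_deriv_nonpos
  · exact fun x => (hasDerivAt_millsRatio x).differentiableAt
  · intro x
    rw [(hasDerivAt_millsRatio x).deriv]
    apply div_nonpos_of_nonpos_of_nonneg _ (sq_nonneg _)
    nlinarith [mills x, normPdf_pos x, normCdf_pos x]

lemma hasDerivAt_log_normCdf (x : ℝ) :
    HasDerivAt (fun y => Real.log (normCdf y)) (normPdf x / normCdf x) x :=
  (hasDerivAt_normCdf x).log (normCdf_pos x).ne'

lemma concave_log_normCdf : ConcaveOn ℝ Set.univ (fun x => Real.log (normCdf x)) := by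
  apply Antitone.concaveOn_univ_of_deriv
  · exact fun x => (hasDerivAt_log_normCdf x).differentiableAt
  · have : deriv (fun y => Real.log (normCdf y)) = fun y => normPdf y / normCdf y :=
      funext fun y => (hasDerivAt_log_normCdf y).deriv
    rw [this]
    exact antitone_millsRatio

/-! ### Composition with a linear map -/

lemma ConcaveOn.comp_mul_left {g : ℝ → ℝ} (hg : ConcaveOn ℝ Set.univ g) (l : ℝ) :
    ConcaveOn ℝ Set.univ (fun x => g (l * x)) := by
  refine ⟨convex_univ, fun x _ y _ a b ha hb hab => ?_⟩
  have h := hg.2 (Set.mem_univ (l * x)) (Set.mem_univ (l * y)) ha hb hab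
  simp only [smul_eq_mul] at h ⊢
  rw [show l * (a * x + b * y) = a * (l * x) + b * (l * y) by ring]
  exact h

/-! ### The skew-normal density -/

noncomputable def snPdf (l x : ℝ) : ℝ := 2 * normPdf x * normCdf (l * x)

noncomputable def snPdf' (l x : ℝ) : ℝ :=
  2 * (-x * normPdf x) * normCdf (l * x) + 2 * normPdf x * (normPdf (l * x) * l)

lemma snPdf_pos (l x : ℝ) : 0 < snPdf l x := by
  have := normPdf_pos x; have := normCdf_pos (l * x); unfold snPdf; positivity

lemma continuous_snPdf (l : ℝ) : Continuous (snPdf l) :=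
  (continuous_const.mul continuous_normPdf).mul
    (continuous_normCdf.comp (continuous_const.mul continuous_id))

lemma hasDerivAt_snPdf (l x : ℝ) : HasDerivAt (snPdf l) (snPdf' l x) x := by
  have h1 : HasDerivAt (fun y : ℝ => normCdf (l * y)) (normPdf (l * x) * l) x :=
    (hasDerivAt_normCdf (l * x)).comp x ((hasDerivAt_id x).const_mul l) |>.congr_deriv
      (by simp [mul_comm])
  have h2 : HasDerivAt (fun y : ℝ => 2 * normPdf y) (2 * (-x * normPdf x)) x :=
    (hasDerivAt_normPdf x).const_mul 2
  exact (h2.mul h1).congr_deriv (by unfold snPdf'; ring)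

lemma snPdf_le (l x : ℝ) : snPdf l x ≤ 2 * normPdf x := by
  unfold snPdf
  have h1 := normCdf_le_one (l * x)
  nlinarith [normPdf_pos x, normCdf_pos (l * x)]

lemma integrable_snPdf (l : ℝ) : Integrable (snPdf l) := by
  apply Integrable.mono' (integrable_normPdf.const_mul 2)
    (continuous_snPdf l).aestronglyMeasurable
  filter_upwards with x
  rw [Real.norm_eq_abs, abs_of_pos (snPdf_pos l x)]
  exact snPdf_le l x

lemma tendsto_snPdf_atBot (l : ℝ) : Tendsto (snPdf l) atBot (nhds 0) := by
  apply squeeze_zero (fun x => (snPdf_pos l x).le) (snPdf_le l)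
  simpa using tendsto_normPdf_atBot.const_mul 2

lemma tendsto_snPdf_atTop (l : ℝ) : Tendsto (snPdf l) atTop (nhds 0) := by
  apply squeeze_zero (fun x => (snPdf_pos l x).le) (snPdf_le l)
  simpa using tendsto_normPdf_atTop.const_mul 2

lemma normPdf_neg (x : ℝ) : normPdf (-x) = normPdf x := by
  unfold normPdf; rw [neg_pow]; norm_num

lemma normCdf_add_neg (a : ℝ) : normCdf a + normCdf (-a) = 1 := by
  have h1 : normCdf (-a) = ∫ t in Ioi a, normPdf t := by
    calc normCdf (-a) = ∫ x in Ioi a, normPdf (-x) := (integral_comp_neg_Ioi a normPdf).symm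
      _ = ∫ t in Ioi a, normPdf t :=
        integral_congr_ae (Filter.Eventually.of_forall fun t => normPdf_neg t)
  rw [h1]
  unfold normCdf
  rw [cdf_add_tail integrable_normPdf a, integral_normPdf]

lemma integral_snPdf (l : ℝ) : ∫ x, snPdf l x = 1 := by
  have hneg : ∫ x, snPdf l (-x) = ∫ x, snPdf l x := integral_neg_eq_self _ _
  have hint : Integrable (fun x => snPdf l (-x)) := (integrable_snPdf l).comp_neg
  have hsum : (∫ x, snPdf l x) + ∫ x, snPdf l (-x)
      = ∫ x, (snPdf l x + snPdf l (-x)) := (integral_add (integrable_snPdf l) hint).symm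
  have hpt : ∀ x, snPdf l x + snPdf l (-x) = 2 * normPdf x := by
    intro x
    unfold snPdf
    rw [normPdf_neg, show l * -x = -(l * x) by ring]
    have := normCdf_add_neg (l * x)
    nlinarith [normPdf_pos x]
  have : (∫ x, snPdf l x) + ∫ x, snPdf l (-x) = 2 := by
    rw [hsum, integral_congr_ae (Filter.Eventually.of_forall hpt),
      integral_const_mul, integral_normPdf]
    norm_num
  linarith [hneg, this]

/-! ### The skew-normal cdf -/

/-- Skew-normal cdf with parameter `l`. -/
noncomputable def snCdf (l z : ℝ) : ℝ := ∫ t in Set.Iic z, 2 * normPdf t * normCdf (l * t)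

lemma snCdf_eq (l z : ℝ) : snCdf l z = ∫ t in Set.Iic z, snPdf l t := rfl

lemma hasDerivAt_snCdf (l x : ℝ) : HasDerivAt (snCdf l) (snPdf l x) x :=
  hasDerivAt_cdf (continuous_snPdf l) (integrable_snPdf l) x

lemma snCdf_pos (l x : ℝ) : 0 < snCdf l x :=
  cdf_pos (integrable_snPdf l) (snPdf_pos l) x

lemma one_sub_snCdf (l x : ℝ) : 1 - snCdf l x = ∫ t in Ioi x, snPdf l t := by
  have h := cdf_add_tail (integrable_snPdf l) x
  rw [integral_snPdf l] at h
  rw [snCdf_eq]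
  linarith

lemma one_sub_snCdf_pos (l x : ℝ) : 0 < 1 - snCdf l x := by
  rw [one_sub_snCdf]
  exact tail_pos (integrable_snPdf l) (snPdf_pos l) x

lemma integrable_snPdf' (l : ℝ) : Integrable (snPdf' l) := by
  have hbd : Integrable (fun t => 2 * |t * normPdf t|
      + (2 * |l| * (Real.sqrt (2 * Real.pi))⁻¹) * normPdf t) :=
    (integrable_mul_normPdf.abs.const_mul 2).add (integrable_normPdf.const_mul _)
  apply Integrable.mono' hbd
  · apply Continuous.aestronglyMeasurable
    unfold snPdf'
    have h1 : Continuous fun x : ℝ => normCdf (l * x) :=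
      continuous_normCdf.comp (continuous_const.mul continuous_id)
    have h2 : Continuous fun x : ℝ => normPdf (l * x) :=
      continuous_normPdf.comp (continuous_const.mul continuous_id)
    exact ((continuous_const.mul (continuous_neg.mul continuous_normPdf)).mul h1).add
      ((continuous_const.mul continuous_normPdf).mul (h2.mul continuous_const))
  filter_upwards with t
  rw [Real.norm_eq_abs]
  unfold snPdf'
  have h1 : |2 * (-t * normPdf t) * normCdf (l * t)| ≤ 2 * |t * normPdf t| := by
    rw [abs_mul, abs_mul]
    have hc : |normCdf (l * t)| ≤ 1 :=
      abs_le.2 ⟨by linarith [normCdf_pos (l * t)], normCdf_le_one (l * t)⟩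
    rw [abs_two, neg_mul, abs_neg]
    calc 2 * |t * normPdf t| * |normCdf (l * t)| ≤ 2 * |t * normPdf t| * 1 := by
          apply mul_le_mul_of_nonneg_left hc (by positivity)
      _ = 2 * |t * normPdf t| := mul_one _
  have h2 : |2 * normPdf t * (normPdf (l * t) * l)|
      ≤ (2 * |l| * (Real.sqrt (2 * Real.pi))⁻¹) * normPdf t := by
    rw [abs_mul, abs_mul, abs_mul, abs_two,
      abs_of_pos (normPdf_pos t), abs_of_pos (normPdf_pos (l * t))]
    have h3 := mul_le_mul_of_nonneg_left (normPdf_le (l * t))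
      (mul_nonneg (mul_nonneg (by norm_num : (0:ℝ) ≤ 2) (abs_nonneg l)) (normPdf_pos t).le)
    nlinarith [h3]
  calc |2 * (-t * normPdf t) * normCdf (l * t) + 2 * normPdf t * (normPdf (l * t) * l)|
      ≤ |2 * (-t * normPdf t) * normCdf (l * t)| + |2 * normPdf t * (normPdf (l * t) * l)| :=
        abs_add_le _ _
    _ ≤ _ := add_le_add h1 h2

lemma integral_Iic_snPdf' (l x : ℝ) : ∫ t in Iic x, snPdf' l t = snPdf l x := by
  have h := MeasureTheory.integral_Iic_of_hasDerivAt_of_tendsto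
    (f := snPdf l) (f' := snPdf' l) (a := x)
    (continuous_snPdf l).continuousWithinAt
    (fun t _ => hasDerivAt_snPdf l t)
    (integrable_snPdf' l).integrableOn
    (tendsto_snPdf_atBot l)
  simpa using h

lemma integral_Ioi_snPdf' (l x : ℝ) : ∫ t in Ioi x, snPdf' l t = -snPdf l x := by
  have h := MeasureTheory.integral_Ioi_of_hasDerivAt_of_tendsto
    (f := snPdf l) (f' := snPdf' l) (a := x)
    (continuous_snPdf l).continuousWithinAt
    (fun t _ => hasDerivAt_snPdf l t)
    (integrable_snPdf' l).integrableOn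
    (tendsto_snPdf_atTop l)
  simpa using h

/-! ### The log-derivative of the skew-normal density is antitone -/

noncomputable def snRho (l x : ℝ) : ℝ := -x + l * (normPdf (l * x) / normCdf (l * x))

lemma snPdf'_eq (l x : ℝ) : snPdf' l x = snRho l x * snPdf l x := by
  unfold snPdf' snRho snPdf
  have h := (normCdf_pos (l * x)).ne'
  have h' := (normCdf_pos (x * l)).ne'
  field_simp

lemma antitone_snRho (l : ℝ) : Antitone (snRho l) := by
  intro x y hxy
  unfold snRho
  have key : l * (normPdf (l * y) / normCdf (l * y))
      ≤ l * (normPdf (l * x) / normCdf (l * x)) := by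
    rcases le_or_gt 0 l with hl | hl
    · have := antitone_millsRatio (mul_le_mul_of_nonneg_left hxy hl)
      exact mul_le_mul_of_nonneg_left this hl
    · have harg : l * y ≤ l * x := mul_le_mul_of_nonpos_left hxy hl.le
      have := antitone_millsRatio harg
      exact mul_le_mul_of_nonpos_left this hl.le
  linarith

lemma key_Iic (l x : ℝ) : snPdf' l x * snCdf l x ≤ snPdf l x ^ 2 := by
  have h1 : snPdf' l x * snCdf l x = ∫ t in Iic x, snPdf' l x * snPdf l t := by
    rw [snCdf_eq, ← integral_const_mul]
  have h2 : (∫ t in Iic x, snPdf' l x * snPdf l t)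
      ≤ ∫ t in Iic x, snPdf l x * snPdf' l t := by
    apply setIntegral_mono_on
    · exact ((integrable_snPdf l).const_mul _).integrableOn
    · exact ((integrable_snPdf' l).const_mul _).integrableOn
    · exact measurableSet_Iic
    · intro t ht
      rw [snPdf'_eq, snPdf'_eq]
      have hρ : snRho l x ≤ snRho l t := antitone_snRho l ht.out
      have := mul_le_mul_of_nonneg_right hρ
        (mul_nonneg (snPdf_pos l x).le (snPdf_pos l t).le)
      nlinarith [this]
  have h3 : (∫ t in Iic x, snPdf l x * snPdf' l t) = snPdf l x ^ 2 := by
    rw [integral_const_mul, integral_Iic_snPdf']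
    ring
  linarith

lemma key_Ioi (l x : ℝ) : -(snPdf l x ^ 2) ≤ snPdf' l x * (1 - snCdf l x) := by
  have h1 : snPdf' l x * (1 - snCdf l x) = ∫ t in Ioi x, snPdf' l x * snPdf l t := by
    rw [one_sub_snCdf, ← integral_const_mul]
  have h2 : (∫ t in Ioi x, snPdf l x * snPdf' l t)
      ≤ ∫ t in Ioi x, snPdf' l x * snPdf l t := by
    apply setIntegral_mono_on
    · exact ((integrable_snPdf' l).const_mul _).integrableOn
    · exact ((integrable_snPdf l).const_mul _).integrableOn
    · exact measurableSet_Ioi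
    · intro t ht
      rw [snPdf'_eq, snPdf'_eq]
      have hρ : snRho l t ≤ snRho l x := antitone_snRho l ht.out.le
      have := mul_le_mul_of_nonneg_right hρ
        (mul_nonneg (snPdf_pos l x).le (snPdf_pos l t).le)
      nlinarith [this]
  have h3 : (∫ t in Ioi x, snPdf l x * snPdf' l t) = -(snPdf l x ^ 2) := by
    rw [integral_const_mul, integral_Ioi_snPdf']
    ring
  linarith

/-! ### Concavity of the logarithmic pieces -/

lemma concave_log_snCdf (l : ℝ) : ConcaveOn ℝ Set.univ (fun x => Real.log (snCdf l x)) := by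
  apply Antitone.concaveOn_univ_of_deriv
  · exact fun x => ((hasDerivAt_snCdf l x).log (snCdf_pos l x).ne').differentiableAt
  · have hd : deriv (fun x => Real.log (snCdf l x)) = fun x => snPdf l x / snCdf l x :=
      funext fun x => ((hasDerivAt_snCdf l x).log (snCdf_pos l x).ne').deriv
    rw [hd]
    apply antitone_of_deriv_nonpos
    · exact fun x => ((hasDerivAt_snPdf l x).div (hasDerivAt_snCdf l x)
        (snCdf_pos l x).ne').differentiableAt
    · intro x
      rw [show (fun x => snPdf l x / snCdf l x) = snPdf l / snCdf l from rfl,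
        ((hasDerivAt_snPdf l x).div (hasDerivAt_snCdf l x) (snCdf_pos l x).ne').deriv]
      apply div_nonpos_of_nonpos_of_nonneg _ (sq_nonneg _)
      have := key_Iic l x
      nlinarith

lemma hasDerivAt_one_sub_snCdf (l x : ℝ) :
    HasDerivAt (fun y => 1 - snCdf l y) (-snPdf l x) x :=
  ((hasDerivAt_snCdf l x).const_sub 1).congr_deriv rfl

lemma concave_log_one_sub_snCdf (l : ℝ) :
    ConcaveOn ℝ Set.univ (fun x => Real.log (1 - snCdf l x)) := by
  apply Antitone.concaveOn_univ_of_deriv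
  · exact fun x => ((hasDerivAt_one_sub_snCdf l x).log
      (one_sub_snCdf_pos l x).ne').differentiableAt
  · have hd : deriv (fun x => Real.log (1 - snCdf l x))
        = fun x => -snPdf l x / (1 - snCdf l x) :=
      funext fun x => ((hasDerivAt_one_sub_snCdf l x).log (one_sub_snCdf_pos l x).ne').deriv
    rw [hd]
    apply antitone_of_deriv_nonpos
    · exact fun x => (((hasDerivAt_snPdf l x).neg).div (hasDerivAt_one_sub_snCdf l x)
        (one_sub_snCdf_pos l x).ne').differentiableAt
    · intro x
      rw [show (fun x => -snPdf l x / (1 - snCdf l x)) = -snPdf l / fun y => 1 - snCdf l y from rfl,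
        (((hasDerivAt_snPdf l x).neg).div (hasDerivAt_one_sub_snCdf l x)
        (one_sub_snCdf_pos l x).ne').deriv]
      apply div_nonpos_of_nonpos_of_nonneg _ (sq_nonneg _)
      have := key_Ioi l x
      simp only [Pi.neg_apply] at *
      nlinarith

lemma concave_log_normPdf : ConcaveOn ℝ Set.univ (fun x => Real.log (normPdf x)) := by
  have heq : (fun x => Real.log (normPdf x))
      = fun x => -x ^ 2 / 2 + -Real.log (Real.sqrt (2 * Real.pi)) := by
    funext x
    unfold normPdf
    rw [Real.log_div (Real.exp_ne_zero _) sqrt2pi_pos.ne', Real.log_exp]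
    ring
  rw [heq]
  apply ConcaveOn.add _ (concaveOn_const _ convex_univ)
  apply Antitone.concaveOn_univ_of_deriv
  · intro x
    exact (((hasDerivAt_pow 2 x).neg).div_const 2).differentiableAt
  · have hd : deriv (fun x : ℝ => -x ^ 2 / 2) = fun x : ℝ => -x := by
      funext x
      rw [HasDerivAt.deriv (f := fun x : ℝ => -x ^ 2 / 2) (((hasDerivAt_pow 2 x).neg).div_const 2)]
      ring
    rw [hd]
    exact fun x y hxy => neg_le_neg hxy

lemma concave_log_normCdf_mul (l : ℝ) :
    ConcaveOn ℝ Set.univ (fun x => Real.log (normCdf (l * x))) :=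
  concave_log_normCdf.comp_mul_left l

/-! ### Final assembly -/

/-- The Beta function. -/
noncomputable def betaFn (a b : ℝ) : ℝ := Real.Gamma a * Real.Gamma b / Real.Gamma (a + b)

/-- The Beta skew-normal density with parameters `l`, `a`, `b`. -/
noncomputable def bsnPdf (l a b x : ℝ) : ℝ :=
  (2 / betaFn a b) * snCdf l x ^ (a - 1) * (1 - snCdf l x) ^ (b - 1) * normPdf x *
    normCdf (l * x)

lemma betaFn_pos {a b : ℝ} (ha : 0 < a) (hb : 0 < b) : 0 < betaFn a b := by
  unfold betaFn
  exact div_pos (mul_pos (Real.Gamma_pos_of_pos ha) (Real.Gamma_pos_of_pos hb))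
    (Real.Gamma_pos_of_pos (by linarith))

lemma log_bsnPdf {a b : ℝ} (ha : 0 < a) (hb : 0 < b) (l x : ℝ) :
    Real.log (bsnPdf l a b x)
      = (((Real.log (2 / betaFn a b) + (a - 1) * Real.log (snCdf l x))
          + (b - 1) * Real.log (1 - snCdf l x)) + Real.log (normPdf x))
        + Real.log (normCdf (l * x)) := by
  have hB := betaFn_pos ha hb
  have h0 : 0 < 2 / betaFn a b := by positivity
  have hF := snCdf_pos l x
  have hG := one_sub_snCdf_pos l x
  have hP : 0 < snCdf l x ^ (a - 1) := Real.rpow_pos_of_pos hF _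
  have hQ : 0 < (1 - snCdf l x) ^ (b - 1) := Real.rpow_pos_of_pos hG _
  have hφ := normPdf_pos x
  have hΦ := normCdf_pos (l * x)
  unfold bsnPdf
  rw [Real.log_mul (by positivity) hΦ.ne', Real.log_mul (by positivity) hφ.ne',
    Real.log_mul (by positivity) hQ.ne', Real.log_mul h0.ne' hP.ne',
    Real.log_rpow hF, Real.log_rpow hG]

/-- The density of the j-th order statistic from a sample of size `n` from `SN(l)`,
namely the `BSN(l, j, n-j+1)` density, is log-concave. -/
theorem bsn_order_statistic_log_concave (l : ℝ) (j n : ℕ) (hj1 : 1 ≤ j) (hjn : j ≤ n) :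
    ConcaveOn ℝ Set.univ fun x : ℝ =>
      Real.log (bsnPdf l j ((n : ℝ) - j + 1) x) := by
  have ha : (0:ℝ) < (j:ℝ) := by exact_mod_cast hj1
  have hb : (0:ℝ) < (n:ℝ) - j + 1 := by
    have : (j:ℝ) ≤ (n:ℝ) := by exact_mod_cast hjn
    linarith
  have hw1 : (0:ℝ) ≤ (j:ℝ) - 1 := by
    have : (1:ℝ) ≤ (j:ℝ) := by exact_mod_cast hj1
    linarith
  have hw2 : (0:ℝ) ≤ ((n:ℝ) - j + 1) - 1 := by
    have : (j:ℝ) ≤ (n:ℝ) := by exact_mod_cast hjn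
    linarith
  have heq : (fun x : ℝ => Real.log (bsnPdf l j ((n : ℝ) - j + 1) x))
      = fun x : ℝ => (((Real.log (2 / betaFn j ((n : ℝ) - j + 1))
          + ((j:ℝ) - 1) * Real.log (snCdf l x))
          + (((n : ℝ) - j + 1) - 1) * Real.log (1 - snCdf l x)) + Real.log (normPdf x))
        + Real.log (normCdf (l * x)) :=
    funext fun x => log_bsnPdf ha hb l x
  rw [heq]
  exact ((((concaveOn_const _ convex_univ).add
      ((concave_log_snCdf l).smul hw1)).add
      ((concave_log_one_sub_snCdf l).smul hw2)).add
      concave_log_normPdf).add (concave_log_normCdf_mul l)
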